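/- Solvability equivalence: the STRIPS planning task P is solvable if and only if the commit task P_c is solvable. -/

import Mathlib

/-- A STRIPS action: positive/negative preconditions, add/delete effects, nonnegative cost. -/
structure StripsAction (α : Type*) where
  prePos : Set α
  preNeg : Set α
  add : Set α
  del : Set α
  cost : NNReal

variable {α : Type*}

/-- An action is applicable in state `s` iff `pre⁺ ⊆ s` and `pre⁻ ∩ s = ∅`. -/
def StripsAction.Applicable (a : StripsAction α) (s : Set α) : Prop :=
  a.prePos ⊆ s ∧ a.preNeg ∩ s = ∅

/-- Result of applying an action: `γ(s,a) = (s \ del(a)) ∪ add(a)`. -/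
def StripsAction.apply (a : StripsAction α) (s : Set α) : Set α :=
  (s \ a.del) ∪ a.add

/-- `Γ(s, π)`: the state resulting from applying the sequence `π` in `s`. -/
def seqResult (s : Set α) : List (StripsAction α) → Set α
  | [] => s
  | a :: π => seqResult (a.apply s) π

/-- A sequence of actions is applicable in `s` if each action is applicable in the
state resulting from the previous ones. -/
def SeqApplicable (s : Set α) : List (StripsAction α) → Prop
  | [] => True
  | a :: π => a.Applicable s ∧ SeqApplicable (a.apply s) π

/-- Cost of a plan: sum of the costs of its actions. -/
def planCost (π : List (StripsAction α)) : NNReal :=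
  (π.map StripsAction.cost).sum

/-- A STRIPS planning task `P = ⟨F, A, I, G⟩`. -/
structure StripsTask (α : Type*) where
  F : Set α
  A : Set (StripsAction α)
  I : Set α
  G : Set α

/-- Well-formedness of a STRIPS planning task: `F` and `A` finite, `I ⊆ F`, `G ⊆ F`,
all action components within `F`, and `add(a) ∩ del(a) = ∅`. -/
def StripsTask.WellFormed (T : StripsTask α) : Prop :=
  T.F.Finite ∧ T.A.Finite ∧ T.I ⊆ T.F ∧ T.G ⊆ T.F ∧
    ∀ a ∈ T.A, a.prePos ⊆ T.F ∧ a.preNeg ⊆ T.F ∧ a.add ⊆ T.F ∧ a.del ⊆ T.F ∧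
      a.add ∩ a.del = ∅

/-- A plan for a task: a sequence of actions of the task, applicable in `I`,
whose result satisfies `G`. -/
def StripsTask.IsPlan (T : StripsTask α) (π : List (StripsAction α)) : Prop :=
  (∀ a ∈ π, a ∈ T.A) ∧ SeqApplicable T.I π ∧ T.G ⊆ seqResult T.I π

/-- A task is solvable if it has a plan. -/
def StripsTask.Solvable (T : StripsTask α) : Prop := ∃ π, T.IsPlan π

/-- An optimal plan: a plan of minimal cost among all plans. -/
def StripsTask.OptimalPlan (T : StripsTask α) (π : List (StripsAction α)) : Prop :=
  T.IsPlan π ∧ ∀ π₂, T.IsPlan π₂ → planCost π ≤ planCost π₂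

/-- Pending goals: `Ḡ = {g ∈ G \ I | ∃ a ∈ A, g ∈ add(a)}`. -/
def pending (T : StripsTask α) : Set α :=
  {g | g ∈ T.G \ T.I ∧ ∃ a ∈ T.A, g ∈ a.add}

/-- The map `g ↦ g-commit` introduces fresh fluents: it is injective on the pending
goals and its values on them avoid `F`. -/
def FreshCommit (T : StripsTask α) (commit : α → α) : Prop :=
  Set.InjOn commit (pending T) ∧ ∀ g ∈ pending T, commit g ∉ T.F

/-- Commit version of an action `a ∈ A^G` for a subset `i ⊆ add(a) ∩ Ḡ`. -/
def commitAction (commit : α → α) (a : StripsAction α) (i : Set α) : StripsAction α :=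
  ⟨a.prePos, a.preNeg ∪ commit '' i, a.add ∪ commit '' i, a.del, a.cost⟩

/-- Force-commit version of an action `a ∈ A^¬G`. -/
def forceCommitAction (commit : α → α) (Gbar : Set α) (a : StripsAction α) : StripsAction α :=
  ⟨a.prePos, a.preNeg ∪ commit '' (a.del ∩ Gbar), a.add, a.del, a.cost⟩

/-- Simultaneous version of an action `a ∈ A^G*` for a subset `j ⊆ add(a) ∩ Ḡ`. -/
def simAction (commit : α → α) (Gbar : Set α) (a : StripsAction α) (j : Set α) : StripsAction α :=
  ⟨a.prePos, a.preNeg ∪ commit '' j ∪ commit '' (a.del ∩ Gbar),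
    a.add ∪ commit '' j, a.del, a.cost⟩

/-- `CompiledFrom T commit a' a` holds iff `a'` is one of the actions of the commit
task built from the original action `a ∈ A`, i.e. `ρ(a') = a`. -/
def CompiledFrom (T : StripsTask α) (commit : α → α) (a' a : StripsAction α) : Prop :=
  a ∈ T.A ∧
    ((a.add ∩ pending T ≠ ∅ ∧ a.del ∩ pending T = ∅ ∧
        ∃ i ⊆ a.add ∩ pending T, a' = commitAction commit a i) ∨
     (a.add ∩ pending T = ∅ ∧ a.del ∩ pending T ≠ ∅ ∧
        a' = forceCommitAction commit (pending T) a) ∨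
     (a.add ∩ pending T ≠ ∅ ∧ a.del ∩ pending T ≠ ∅ ∧
        ∃ j ⊆ a.add ∩ pending T, a' = simAction commit (pending T) a j) ∨
     (a.add ∩ pending T = ∅ ∧ a.del ∩ pending T = ∅ ∧ a' = a))

/-- The commit planning task `P_c = ⟨F ∪ F', A_c, I, G_c⟩`. -/
def commitTask (T : StripsTask α) (commit : α → α) : StripsTask α :=
  ⟨T.F ∪ commit '' pending T,
   {a' | ∃ a, CompiledFrom T commit a' a},
   T.I,
   (T.G \ pending T) ∪ commit '' pending T⟩


section CommitAux

variable {α : Type*}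

/-- Pending goals already achieved in `s` and untouched by every action of `π`. -/
def Dset (T : StripsTask α) (s : Set α) (π : List (StripsAction α)) : Set α :=
  {g | g ∈ pending T ∧ g ∈ s ∧ ∀ a ∈ π, g ∉ a.add ∧ g ∉ a.del}

lemma action_ext {a b : StripsAction α} (h1 : a.prePos = b.prePos)
    (h2 : a.preNeg = b.preNeg) (h3 : a.add = b.add) (h4 : a.del = b.del)
    (h5 : a.cost = b.cost) : a = b := by
  cases a; cases b; simp_all

lemma seqResult_subset_F {T : StripsTask α} (hwf : T.WellFormed) :
    ∀ (π : List (StripsAction α)) (s : Set α), s ⊆ T.F → (∀ a ∈ π, a ∈ T.A) →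
      seqResult s π ⊆ T.F
  | [], _, hs, _ => hs
  | a :: π, s, hs, hA => by
      apply seqResult_subset_F hwf π _ _ (fun b hb => hA b (List.mem_cons_of_mem _ hb))
      rintro x (⟨hx, -⟩ | hx)
      · exact hs hx
      · exact (hwf.2.2.2.2 a (hA a (List.mem_cons_self))).2.2.1 hx

lemma forward_aux {T : StripsTask α} {commit : α → α} (hwf : T.WellFormed)
    (hfresh : FreshCommit T commit) :
    ∀ (π : List (StripsAction α)) (s : Set α), s ⊆ T.F → (∀ a ∈ π, a ∈ T.A) →
      SeqApplicable s π →
      ∃ π', (∀ a' ∈ π', a' ∈ (commitTask T commit).A) ∧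
        SeqApplicable (s ∪ commit '' Dset T s π) π' ∧
        seqResult (s ∪ commit '' Dset T s π) π' =
          seqResult s π ∪ commit '' {g | g ∈ pending T ∧ g ∈ seqResult s π} := by
  intro π
  induction π with
  | nil =>
    intro s hs hA happ
    refine ⟨[], by simp, trivial, ?_⟩
    have hD : Dset T s [] = {g | g ∈ pending T ∧ g ∈ s} := by ext g; simp [Dset]
    rw [hD]
    rfl
  | cons a π ih =>
    intro s hs hA happ
    obtain ⟨hap, happ'⟩ := happ
    have haA : a ∈ T.A := hA a (List.mem_cons_self)
    obtain ⟨hpreF, hnegF, haddF, hdelF, haddel⟩ := hwf.2.2.2.2 a haA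
    have hs₁F : a.apply s ⊆ T.F := by
      rintro x (⟨hx, -⟩ | hx)
      · exact hs hx
      · exact haddF hx
    set D := Dset T s (a :: π) with hDdef
    set D₁ := Dset T (a.apply s) π with hD₁def
    set i := D₁ ∩ a.add with hidef
    have hDP : D ⊆ pending T := fun g hg => hg.1
    have hD₁P : D₁ ⊆ pending T := fun g hg => hg.1
    have hiP : i ⊆ pending T := fun g hg => hD₁P hg.1
    have hi_add : i ⊆ a.add ∩ pending T := fun g hg => ⟨hg.2, hD₁P hg.1⟩
    have hDa : ∀ g ∈ D, g ∉ a.add ∧ g ∉ a.del :=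
      fun g hg => hg.2.2 a (List.mem_cons_self)
    have hDD₁ : D ⊆ D₁ := by
      intro g hg
      refine ⟨hg.1, Or.inl ⟨hg.2.1, (hDa g hg).2⟩,
        fun b hb => hg.2.2 b (List.mem_cons_of_mem _ hb)⟩
    have hD₁eq : D₁ = D ∪ i := by
      ext g
      constructor
      · intro hg
        by_cases hadd : g ∈ a.add
        · exact Or.inr ⟨hg, hadd⟩
        · left
          have hgs : g ∈ s ∧ g ∉ a.del := by
            rcases hg.2.1 with ⟨h1, h2⟩ | h1
            · exact ⟨h1, h2⟩
            · exact absurd h1 hadd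
          refine ⟨hg.1, hgs.1, fun b hb => ?_⟩
          rcases List.mem_cons.mp hb with rfl | hb
          · exact ⟨hadd, hgs.2⟩
          · exact hg.2.2 b hb
      · rintro (hg | hg)
        · exact hDD₁ hg
        · exact hg.1
    set a' := simAction commit (pending T) a i with ha'def
    have hi0 : a.add ∩ pending T = ∅ → i = ∅ := by
      intro h
      exact Set.subset_empty_iff.mp (h ▸ hi_add)
    have ha'mem : a' ∈ (commitTask T commit).A := by
      refine ⟨a, haA, ?_⟩
      by_cases hAdd : a.add ∩ pending T = ∅ <;> by_cases hDel : a.del ∩ pending T = ∅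
      · refine Or.inr (Or.inr (Or.inr ⟨hAdd, hDel, ?_⟩))
        exact action_ext (by simp [ha'def, simAction])
          (by simp [ha'def, simAction, hi0 hAdd, hDel])
          (by simp [ha'def, simAction, hi0 hAdd]) (by simp [ha'def, simAction])
          (by simp [ha'def, simAction])
      · refine Or.inr (Or.inl ⟨hAdd, hDel, ?_⟩)
        exact action_ext (by simp [ha'def, simAction, forceCommitAction])
          (by simp [ha'def, simAction, forceCommitAction, hi0 hAdd])
          (by simp [ha'def, simAction, forceCommitAction, hi0 hAdd])
          (by simp [ha'def, simAction, forceCommitAction])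
          (by simp [ha'def, simAction, forceCommitAction])
      · refine Or.inl ⟨hAdd, hDel, i, hi_add, ?_⟩
        exact action_ext (by simp [ha'def, simAction, commitAction])
          (by simp [ha'def, simAction, commitAction, hDel])
          (by simp [ha'def, simAction, commitAction])
          (by simp [ha'def, simAction, commitAction])
          (by simp [ha'def, simAction, commitAction])
      · exact Or.inr (Or.inr (Or.inl ⟨hAdd, hDel, i, hi_add, rfl⟩))
    have hap' : a'.Applicable (s ∪ commit '' D) := by
      constructor
      · exact fun x hx => Or.inl (hap.1 hx)
      · rw [Set.eq_empty_iff_forall_notMem]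
        rintro x ⟨hx1, hx2⟩
        rcases hx2 with hxs | ⟨g, hgD, rfl⟩
        · rcases hx1 with (hx1 | ⟨g, hg, rfl⟩) | ⟨g, hg, rfl⟩
          · exact Set.eq_empty_iff_forall_notMem.mp hap.2 x ⟨hx1, hxs⟩
          · exact hfresh.2 g (hiP hg) (hs hxs)
          · exact hfresh.2 g hg.2 (hs hxs)
        · rcases hx1 with (hx1 | ⟨g', hg', heq⟩) | ⟨g', hg', heq⟩
          · exact hfresh.2 g (hDP hgD) (hnegF hx1)
          · have hgg : g' = g := hfresh.1 (hiP hg') (hDP hgD) heq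
            exact (hDa g hgD).1 (hgg ▸ hg'.2)
          · have hgg : g' = g := hfresh.1 hg'.2 (hDP hgD) heq
            exact (hDa g hgD).2 (hgg ▸ hg'.1)
    have happly : a'.apply (s ∪ commit '' D) = a.apply s ∪ commit '' D₁ := by
      have hCdel : ∀ x ∈ commit '' D, x ∉ a.del := by
        rintro x ⟨g, hg, rfl⟩ hmem
        exact hfresh.2 g (hDP hg) (hdelF hmem)
      rw [hD₁eq, Set.image_union]
      ext x
      simp only [StripsAction.apply, simAction, Set.mem_union, Set.mem_diff]
      constructor
      · rintro (⟨h | h, hnd⟩ | h | h)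
        · exact Or.inl (Or.inl ⟨h, hnd⟩)
        · exact Or.inr (Or.inl h)
        · exact Or.inl (Or.inr h)
        · exact Or.inr (Or.inr h)
      · rintro ((⟨h, hnd⟩ | h) | h | h)
        · exact Or.inl ⟨Or.inl h, hnd⟩
        · exact Or.inr (Or.inl h)
        · exact Or.inl ⟨Or.inr h, hCdel x h⟩
        · exact Or.inr (Or.inr h)
    obtain ⟨π', hπ'A, hπ'app, hπ'res⟩ :=
      ih (a.apply s) hs₁F (fun b hb => hA b (List.mem_cons_of_mem _ hb)) happ'
    refine ⟨a' :: π', ?_, ⟨hap', ?_⟩, ?_⟩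
    · intro b hb
      rcases List.mem_cons.mp hb with rfl | hb
      · exact ha'mem
      · exact hπ'A b hb
    · rw [happly]
      exact hπ'app
    · show seqResult (a'.apply (s ∪ commit '' D)) π' = _
      rw [happly, hπ'res]
      rfl

lemma compiled_shape {T : StripsTask α} {commit : α → α} {a' a : StripsAction α}
    (h : CompiledFrom T commit a' a) :
    ∃ i ⊆ a.add ∩ pending T,
      a'.prePos = a.prePos ∧ a.preNeg ⊆ a'.preNeg ∧
      commit '' (a.del ∩ pending T) ⊆ a'.preNeg ∧
      a'.add = a.add ∪ commit '' i ∧ a'.del = a.del := by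
  obtain ⟨-, h⟩ := h
  rcases h with ⟨hA, hD, i, hi, rfl⟩ | ⟨hA, hD, rfl⟩ | ⟨hA, hD, j, hj, rfl⟩ | ⟨hA, hD, rfl⟩
  · exact ⟨i, hi, rfl, Set.subset_union_left, by rw [hD]; simp, rfl, rfl⟩
  · exact ⟨∅, by simp, rfl, Set.subset_union_left, Set.subset_union_right,
      by simp [forceCommitAction], rfl⟩
  · exact ⟨j, hj, rfl, fun x hx => Or.inl (Or.inl hx), Set.subset_union_right, rfl, rfl⟩
  · exact ⟨∅, by simp, rfl, subset_rfl, by rw [hD]; simp, by simp, rfl⟩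

lemma backward_aux {T : StripsTask α} {commit : α → α} (hwf : T.WellFormed)
    (hfresh : FreshCommit T commit) :
    ∀ (π' : List (StripsAction α)) (s C : Set α), s ⊆ T.F →
      (∀ a ∈ π', a ∈ (commitTask T commit).A) →
      C ⊆ commit '' pending T →
      (∀ g ∈ pending T, commit g ∈ C → g ∈ s) →
      SeqApplicable (s ∪ C) π' →
      ∃ π C', (∀ a ∈ π, a ∈ T.A) ∧ SeqApplicable s π ∧
        C' ⊆ commit '' pending T ∧
        (∀ g ∈ pending T, commit g ∈ C' → g ∈ seqResult s π) ∧
        seqResult (s ∪ C) π' = seqResult s π ∪ C' := by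
  intro π'
  induction π' with
  | nil =>
    intro s C hs _ hC hsan _
    exact ⟨[], C, by simp, trivial, hC, hsan, rfl⟩
  | cons a' rest ih =>
    intro s C hs hA' hC hsan happ
    obtain ⟨hap', happ'⟩ := happ
    obtain ⟨a, hcf⟩ := hA' a' (List.mem_cons_self)
    have haA := hcf.1
    obtain ⟨hpreF, hnegF, haddF, hdelF, -⟩ := hwf.2.2.2.2 a haA
    obtain ⟨i, hisub, hpp, hpn, hdn, hadd', hdel'⟩ := compiled_shape hcf
    have hap : a.Applicable s := by
      constructor
      · intro x hx
        have hx' : x ∈ s ∪ C := hap'.1 (hpp.symm ▸ hx)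
        rcases hx' with h | h
        · exact h
        · obtain ⟨g, hg, rfl⟩ := hC h
          exact absurd (hpreF hx) (hfresh.2 g hg)
      · rw [Set.eq_empty_iff_forall_notMem]
        rintro x ⟨hx1, hx2⟩
        exact Set.eq_empty_iff_forall_notMem.mp hap'.2 x ⟨hpn hx1, Or.inl hx2⟩
    have hC₁sub : C ∪ commit '' i ⊆ commit '' pending T := by
      rintro x (hx | ⟨g, hg, rfl⟩)
      · exact hC hx
      · exact ⟨g, (hisub hg).2, rfl⟩
    have hsan₁ : ∀ g ∈ pending T, commit g ∈ C ∪ commit '' i → g ∈ a.apply s := by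
      rintro g hgP (hgC | ⟨g', hg', heq⟩)
      · have hgs : g ∈ s := hsan g hgP hgC
        have hgdel : g ∉ a.del := by
          intro hdel
          exact Set.eq_empty_iff_forall_notMem.mp hap'.2 (commit g)
            ⟨hdn ⟨g, ⟨hdel, hgP⟩, rfl⟩, Or.inr hgC⟩
        exact Or.inl ⟨hgs, hgdel⟩
      · have hgg : g' = g := hfresh.1 (hisub hg').2 hgP heq
        exact Or.inr (hgg ▸ (hisub hg').1)
    have happly : a'.apply (s ∪ C) = a.apply s ∪ (C ∪ commit '' i) := by
      have hCdel : ∀ x ∈ C, x ∉ a.del := by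
        intro x hx hmem
        obtain ⟨g, hg, rfl⟩ := hC hx
        exact hfresh.2 g hg (hdelF hmem)
      ext x
      simp only [StripsAction.apply, hadd', hdel', Set.mem_union, Set.mem_diff]
      constructor
      · rintro (⟨h | h, hnd⟩ | h | h)
        · exact Or.inl (Or.inl ⟨h, hnd⟩)
        · exact Or.inr (Or.inl h)
        · exact Or.inl (Or.inr h)
        · exact Or.inr (Or.inr h)
      · rintro ((⟨h, hnd⟩ | h) | h | h)
        · exact Or.inl ⟨Or.inl h, hnd⟩
        · exact Or.inr (Or.inl h)
        · exact Or.inl ⟨Or.inr h, hCdel x h⟩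
        · exact Or.inr (Or.inr h)
    have hs₁ : a.apply s ⊆ T.F := by
      rintro x (⟨hx, -⟩ | hx)
      · exact hs hx
      · exact haddF hx
    obtain ⟨π, C', hπA, hπapp, hC'sub, hsan', hres⟩ :=
      ih (a.apply s) (C ∪ commit '' i) hs₁
        (fun b hb => hA' b (List.mem_cons_of_mem _ hb)) hC₁sub hsan₁
        (by rw [← happly]; exact happ')
    refine ⟨a :: π, C', ?_, ⟨hap, hπapp⟩, hC'sub, hsan', ?_⟩
    · intro b hb
      rcases List.mem_cons.mp hb with rfl | hb
      · exact haA
      · exact hπA b hb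
    · show seqResult (a'.apply (s ∪ C)) rest = _
      rw [happly]
      exact hres

end CommitAux

/-- Solvability equivalence: `P` is solvable iff `P_c` is solvable. -/
theorem commit_compilation_solvable_iff {α : Type*} (T : StripsTask α) (commit : α → α)
    (hwf : T.WellFormed) (hfresh : FreshCommit T commit) :
    T.Solvable ↔ (commitTask T commit).Solvable := by
  constructor
  · rintro ⟨π, hπA, hπapp, hπG⟩
    have hIF : T.I ⊆ T.F := hwf.2.2.1
    have hDempty : Dset T T.I π = ∅ := by
      ext g
      simp only [Dset, Set.mem_setOf_eq, Set.mem_empty_iff_false, iff_false]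
      rintro ⟨hg, hgI, -⟩
      exact hg.1.2 hgI
    obtain ⟨π', hA', happ', hres'⟩ := forward_aux hwf hfresh π T.I hIF hπA hπapp
    rw [hDempty] at happ' hres'
    simp only [Set.image_empty, Set.union_empty] at happ' hres'
    refine ⟨π', hA', happ', ?_⟩
    show (T.G \ pending T) ∪ commit '' pending T ⊆ seqResult T.I π'
    rw [hres']
    rintro x (hx | ⟨g, hgP, rfl⟩)
    · exact Or.inl (hπG hx.1)
    · exact Or.inr ⟨g, ⟨hgP, hπG hgP.1.1⟩, rfl⟩
  · rintro ⟨π', hA', happ', hG'⟩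
    obtain ⟨π, C', hπA, hπapp, hC'sub, hsan', hres⟩ :=
      backward_aux hwf hfresh π' T.I ∅ hwf.2.2.1 hA' (by simp) (by simp)
        (by rw [Set.union_empty]; exact happ')
    have hres' : seqResult T.I π' = seqResult T.I π ∪ C' := by
      rw [Set.union_empty] at hres
      exact hres
    refine ⟨π, hπA, hπapp, ?_⟩
    have hsnF : seqResult T.I π ⊆ T.F := seqResult_subset_F hwf π T.I hwf.2.2.1 hπA
    intro g hg
    by_cases hgP : g ∈ pending T
    · have hcg : commit g ∈ seqResult T.I π' := hG' (Or.inr ⟨g, hgP, rfl⟩)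
      rw [hres'] at hcg
      rcases hcg with hcg | hcg
      · exact absurd (hsnF hcg) (hfresh.2 g hgP)
      · exact hsan' g hgP hcg
    · have hgc : g ∈ seqResult T.I π' := hG' (Or.inl ⟨hg, hgP⟩)
      rw [hres'] at hgc
      rcases hgc with hgc | hgc
      · exact hgc
      · obtain ⟨g', hg', rfl⟩ := hC'sub hgc
        exact absurd (hwf.2.2.2.1 hg) (hfresh.2 g' hg')
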